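/- In a simple GNP testing problem over countable Y with all P ∈ H0 of full support: if S is a sharp e-variable for H0, δ* is maximally compatible with S, and the problem is rich relative to S (for every value s in the range of S there exist b ∈ 𝓑 and a ∈ A_b with L_b(a) = s), then δ* is admissible. -/

import Mathlib

open MeasureTheory ENNReal

variable {Y 𝓑 : Type*}

/-- δ is compatible with e-variable S: Type-I loss is bounded by S pointwise. -/
def Compatible (A : 𝓑 → Type*) (L : (b : 𝓑) → A b → ℝ≥0∞)
    (δ : (b : 𝓑) → Y → A b) (S : Y → ℝ≥0∞) : Prop :=
  ∀ b : 𝓑, ∀ y : Y, L b (δ b y) ≤ S y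

/-- δ' is Type-II strictly better than δ. -/
def TypeIIStrictlyBetter [MeasurableSpace Y] (H0 : Set (Measure Y))
    (A : 𝓑 → Type*) (L : (b : 𝓑) → A b → ℝ≥0∞)
    (δ' δ : (b : 𝓑) → Y → A b) : Prop :=
  (∀ b : 𝓑, ∀ y : Y, L b (δ b y) ≤ L b (δ' b y)) ∧
  (∃ b : 𝓑, ∃ y : Y, ∃ P ∈ H0, 0 < P {y} ∧ L b (δ b y) < L b (δ' b y))

/-- δ is Type-I risk safe: compatible with some e-variable for H0. -/
def TypeIRiskSafe [MeasurableSpace Y] (H0 : Set (Measure Y))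
    (A : 𝓑 → Type*) (L : (b : 𝓑) → A b → ℝ≥0∞)
    (δ : (b : 𝓑) → Y → A b) : Prop :=
  ∃ S : Y → ℝ≥0∞, Measurable S ∧ (∀ P ∈ H0, ∫⁻ y, S y ∂P ≤ 1) ∧ Compatible A L δ S

/-- δ is admissible. -/
def Admissible [MeasurableSpace Y] (H0 : Set (Measure Y))
    (A : 𝓑 → Type*) (L : (b : 𝓑) → A b → ℝ≥0∞)
    (δ : (b : 𝓑) → Y → A b) : Prop :=
  TypeIRiskSafe H0 A L δ ∧
  ¬ ∃ δ' : (b : 𝓑) → Y → A b, TypeIRiskSafe H0 A L δ' ∧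
      TypeIIStrictlyBetter H0 A L δ' δ

/-- δ is maximally compatible with S. -/
def MaximallyCompatible [MeasurableSpace Y] (H0 : Set (Measure Y))
    (A : 𝓑 → Type*) (L : (b : 𝓑) → A b → ℝ≥0∞)
    (δ : (b : 𝓑) → Y → A b) (S : Y → ℝ≥0∞) : Prop :=
  Compatible A L δ S ∧
  ¬ ∃ δ' : (b : 𝓑) → Y → A b, Compatible A L δ' S ∧
      TypeIIStrictlyBetter H0 A L δ' δ

/-- Theorem, countable case, Part 2: if S is a sharp e-variable, δ* is
maximally compatible with S, and the problem is rich relative to S, then δ* is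
admissible. -/
theorem maximally_compatible_implies_admissible
    [Countable Y] [MeasurableSpace Y] [MeasurableSingletonClass Y]
    (H0 : Set (Measure Y)) (hprob : ∀ P ∈ H0, IsProbabilityMeasure P)
    (hfull : ∀ P ∈ H0, ∀ y : Y, 0 < P {y})
    (A : 𝓑 → Type*) (L : (b : 𝓑) → A b → ℝ≥0∞) (δstar : (b : 𝓑) → Y → A b)
    (S : Y → ℝ≥0∞) (hSm : Measurable S)
    (hSe : ∀ P ∈ H0, ∫⁻ y, S y ∂P ≤ 1)
    (hsharp : ∃ P0 ∈ H0, ∫⁻ y, S y ∂P0 = 1)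
    (hmax : MaximallyCompatible H0 A L δstar S)
    (hrich : ∀ y : Y, ∃ b : 𝓑, ∃ a : A b, L b a = S y) :
    Admissible H0 A L δstar := by
  classical
  obtain ⟨P0, hP0, hP0int⟩ := hsharp
  -- Step 1: δ* attains S at the rich coordinate: ∀ y, ∃ b, L b (δstar b y) = S y
  have hattain : ∀ y : Y, ∃ b : 𝓑, L b (δstar b y) = S y := by
    intro y
    obtain ⟨b, a, hba⟩ := hrich y
    refine ⟨b, le_antisymm (hmax.1 b y) ?_⟩
    by_contra hlt
    push_neg at hlt
    -- modify δstar at (b, y) to get a strictly better compatible rule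
    set δ'' : (b' : 𝓑) → Y → A b' :=
      Function.update δstar b (Function.update (δstar b) y a) with hδ''
    have hδb : δ'' b = Function.update (δstar b) y a := Function.update_self _ _ _
    have hδ''y : δ'' b y = a := by rw [hδb]; exact Function.update_self _ _ _
    apply hmax.2
    refine ⟨δ'', ?_, ?_, ?_⟩
    · intro b' y'
      by_cases hb : b' = b
      · subst hb
        rw [hδb]
        by_cases hy : y' = y
        · subst hy; rw [Function.update_self, hba]
        · rw [Function.update_of_ne hy]; exact hmax.1 b' y'
      · rw [hδ'', Function.update_of_ne hb]; exact hmax.1 b' y'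
    · intro b' y'
      by_cases hb : b' = b
      · subst hb
        rw [hδb]
        by_cases hy : y' = y
        · subst hy; rw [Function.update_self, hba]; exact hmax.1 _ _
        · rw [Function.update_of_ne hy]
      · rw [hδ'', Function.update_of_ne hb]
    · exact ⟨b, y, P0, hP0, hfull P0 hP0 y, by rw [hδ''y, hba]; exact hlt⟩
  refine ⟨⟨S, hSm, hSe, hmax.1⟩, ?_⟩
  rintro ⟨δ', ⟨S', hS'm, hS'e, hcomp'⟩, hbetter⟩
  -- Step 2: S ≤ S' pointwise
  have hSS' : ∀ y, S y ≤ S' y := by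
    intro y
    obtain ⟨b, hb⟩ := hattain y
    calc S y = L b (δstar b y) := hb.symm
      _ ≤ L b (δ' b y) := hbetter.1 b y
      _ ≤ S' y := hcomp' b y
  -- Step 3: ∫ S' dP0 = 1 and hence S' = S everywhere
  have hint' : ∫⁻ y, S' y ∂P0 = 1 :=
    le_antisymm (hS'e P0 hP0) (hP0int ▸ lintegral_mono hSS')
  have hsplit : ∫⁻ y, S' y ∂P0 = ∫⁻ y, S y ∂P0 + ∫⁻ y, (S' y - S y) ∂P0 := by
    rw [← lintegral_add_left hSm]
    exact lintegral_congr fun y => (add_tsub_cancel_of_le (hSS' y)).symm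
  have hz : ∫⁻ y, (S' y - S y) ∂P0 = 0 := by
    rw [hint', hP0int] at hsplit
    by_contra hne
    have : (1 : ℝ≥0∞) < 1 + ∫⁻ y, (S' y - S y) ∂P0 :=
      ENNReal.lt_add_right one_ne_top hne
    exact absurd hsplit (by intro h; rw [← h] at this; exact lt_irrefl _ this)
  have hae : ∀ᵐ y ∂P0, S' y - S y = 0 :=
    (lintegral_eq_zero_iff (hS'm.sub hSm)).1 hz
  have hSeq : ∀ y, S' y = S y := by
    intro y
    by_contra hne
    have hlt : S y < S' y := lt_of_le_of_ne (hSS' y) (Ne.symm hne)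
    have hy : ¬ (S' y - S y = 0) := by
      rw [tsub_eq_zero_iff_le]; exact not_le.2 hlt
    have hsub : {y} ⊆ {x | ¬ (S' x - S x = 0)} := by
      intro x hx; rw [Set.mem_singleton_iff] at hx; subst hx; exact hy
    have : P0 {y} = 0 := le_antisymm (le_trans (measure_mono hsub) (le_of_eq (ae_iff.1 hae))) zero_le
    exact absurd this (ne_of_gt (hfull P0 hP0 y))
  -- Step 4: δ' is compatible with S, contradicting maximal compatibility
  exact hmax.2 ⟨δ', fun b y => (hSeq y) ▸ hcomp' b y, hbetter⟩
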